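/- arXiv:2311.03376 — 6 statements merged into one kernel-verified Lean document; each statement's English description precedes it below -/
import Mathlib

section
/- Let P, Q be vectors in R^N and let π, σ be permutations of [N] sorting P and Q respectively in descending order (P_{π(i)} ≥ P_{π(j)} and Q_{σ(i)} ≥ Q_{σ(j)} for i < j). If |P_k − Q_k| ≤ ρ for every k ∈ [N], then for every index i ∈ [N] we have P_{σ(i)} ≥ P_{π(i)} − 2ρ. -/
/-- If `Q` is an entry-wise `ρ`-accurate estimate of `P`, and `π`, `σ` sort `P`, `Q`
respectively in descending order, then the item ranked `i`-th by the estimate has true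
reward at least that of the true `i`-th best item minus `2ρ`. -/
theorem stmt0 (N : ℕ) (P Q : Fin N → ℝ) (π σ : Equiv.Perm (Fin N)) (ρ : ℝ)
    (hπ : ∀ i j : Fin N, i < j → P (π j) ≤ P (π i))
    (hσ : ∀ i j : Fin N, i < j → Q (σ j) ≤ Q (σ i))
    (hρ : ∀ k : Fin N, |P k - Q k| ≤ ρ) :
    ∀ i : Fin N, P (π i) - 2 * ρ ≤ P (σ i) := by
  intro i
  -- Find a ∈ π(Iic i) not in σ(Iio i)
  have hcard : ((Finset.Iio i).image σ).card < ((Finset.Iic i).image π).card := by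
    rw [Finset.card_image_of_injective _ π.injective,
        Finset.card_image_of_injective _ σ.injective,
        Fin.card_Iic, Fin.card_Iio]
    omega
  obtain ⟨a, haA, haB⟩ := Finset.not_subset.mp (fun h => absurd (Finset.card_le_card h) (not_le.mpr hcard))
  obtain ⟨j, hj, rfl⟩ := Finset.mem_image.mp haA
  rw [Finset.mem_Iic] at hj
  -- σ.symm (π j) ≥ i
  have hge : i ≤ σ.symm (π j) := by
    by_contra h
    push_neg at h
    exact haB (Finset.mem_image.mpr ⟨σ.symm (π j), Finset.mem_Iio.mpr h, σ.apply_symm_apply _⟩)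
  have h1 : Q (π j) ≤ Q (σ i) := by
    rcases eq_or_lt_of_le hge with h | h
    · rw [← σ.apply_symm_apply (π j), ← h]
    · have := hσ i (σ.symm (π j)) h
      rwa [σ.apply_symm_apply] at this
  have h2 : P (π i) ≤ P (π j) := by
    rcases eq_or_lt_of_le hj with h | h
    · rw [h]
    · exact hπ j i h
  have h3 := abs_le.mp (hρ (π j))
  have h4 := abs_le.mp (hρ (σ i))
  linarith [h3.1, h3.2, h4.1, h4.2]
end

section
/- Let P, Q be vectors in R^N with |P_k − Q_k| ≤ Δ for all k, and let π, σ be permutations sorting P, Q respectively in descending order. Then for every s ∈ [N], |( P_{π(1)} − P_{π(s)} ) − ( Q_{σ(1)} − Q_{σ(s)} )| ≤ 6Δ. -/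
lemma sorted_close (N : ℕ) (P Q : Fin N → ℝ) (π σ : Equiv.Perm (Fin N)) (Δ : ℝ)
    (hΔ : ∀ k : Fin N, |P k - Q k| ≤ Δ)
    (hπ : ∀ i j : Fin N, i < j → P (π j) ≤ P (π i))
    (hσ : ∀ i j : Fin N, i < j → Q (σ j) ≤ Q (σ i))
    (s : Fin N) : P (π s) ≤ Q (σ s) + Δ := by
  by_contra h
  push_neg at h
  have hsub : (Finset.Iic s).image π ⊆ (Finset.Iio s).image σ := by
    intro j hj
    simp only [Finset.mem_image, Finset.mem_Iic, Finset.mem_Iio] at hj ⊢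
    obtain ⟨i, hi, rfl⟩ := hj
    have h1 : P (π s) ≤ P (π i) := by
      rcases lt_or_eq_of_le hi with hlt | rfl
      · exact hπ i s hlt
      · exact le_refl _
    have h2 : Q (π i) ≥ P (π i) - Δ := by
      have := abs_le.mp (hΔ (π i)); linarith [this.1, this.2]
    have h3 : Q (σ s) < Q (π i) := by linarith
    refine ⟨σ.symm (π i), ?_, by simp⟩
    by_contra hle
    push_neg at hle
    have : Q (σ (σ.symm (π i))) ≤ Q (σ s) := by
      rcases lt_or_eq_of_le hle with hlt | heq
      · exact hσ s _ hlt
      · rw [← heq]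
    simp at this
    linarith
  have hcard := Finset.card_le_card hsub
  rw [Finset.card_image_of_injective _ π.injective,
    Finset.card_image_of_injective _ σ.injective, Fin.card_Iic, Fin.card_Iio] at hcard
  omega

/-- If `Q` is entry-wise `Δ`-close to `P` and `π`, `σ` sort `P`, `Q` in descending order,
then the gap between the top item and the `s`-th item is preserved up to `6Δ`. -/
theorem stmt1 (N : ℕ) (hN : 0 < N) (P Q : Fin N → ℝ) (π σ : Equiv.Perm (Fin N)) (Δ : ℝ)
    (hΔ : ∀ k : Fin N, |P k - Q k| ≤ Δ)
    (hπ : ∀ i j : Fin N, i < j → P (π j) ≤ P (π i))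
    (hσ : ∀ i j : Fin N, i < j → Q (σ j) ≤ Q (σ i)) :
    ∀ s : Fin N,
      |(P (π ⟨0, hN⟩) - P (π s)) - (Q (σ ⟨0, hN⟩) - Q (σ s))| ≤ 6 * Δ := by
  intro s
  have hΔ' : ∀ k : Fin N, |Q k - P k| ≤ Δ := fun k => by rw [abs_sub_comm]; exact hΔ k
  have h1 := sorted_close N P Q π σ Δ hΔ hπ hσ ⟨0, hN⟩
  have h2 := sorted_close N Q P σ π Δ hΔ' hσ hπ ⟨0, hN⟩
  have h3 := sorted_close N P Q π σ Δ hΔ hπ hσ s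
  have h4 := sorted_close N Q P σ π Δ hΔ' hσ hπ s
  have hΔ0 : 0 ≤ Δ := le_trans (abs_nonneg _) (hΔ ⟨0, hN⟩)
  rw [abs_le]
  constructor <;> linarith
end

section
/- Let u, v be users with reward vectors P_u, P_v and estimates Q_u, Q_v satisfying |P_{w,x} − Q_{w,x}| ≤ Δ for w ∈ {u,v} and all x, and suppose there is a chain of users u = a_0, a_1, ..., a_L = v such that consecutive users a_i, a_{i+1} satisfy |Q_{a_i,x} − Q_{a_{i+1},x}| ≤ 2Δ for all items x (with all intermediate users also having Δ-accurate estimates). Define R_u, R_v as the sets of items within 2Δ of each user's estimated maximum. Then for all x ∈ R_u, y ∈ R_v: |P_{u,x} − P_{u,y}| ≤ 8(L+1)Δ and |P_{v,x} − P_{v,y}| ≤ 8(L+1)Δ. -/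
/-- Users `u = a 0` and `v = a L` connected by a chain of users whose estimates are
pairwise entry-wise `2Δ`-close, each user having a `Δ`-accurate estimate of its true
reward vector: items within `2Δ` of the respective estimated maxima of `u` and `v` have
true rewards within `8(L+1)Δ` for both `u` and `v`. -/
theorem stmt5 (N : ℕ) (ι : Type*) (P Q : ι → Fin N → ℝ) (Δ : ℝ) (L : ℕ) (a : ℕ → ι)
    (hacc : ∀ i ≤ L, ∀ x : Fin N, |P (a i) x - Q (a i) x| ≤ Δ)
    (hchain : ∀ i < L, ∀ x : Fin N, |Q (a i) x - Q (a (i + 1)) x| ≤ 2 * Δ) :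
    ∀ x y : Fin N,
      (∀ k : Fin N, Q (a 0) k - 2 * Δ ≤ Q (a 0) x) →
      (∀ k : Fin N, Q (a L) k - 2 * Δ ≤ Q (a L) y) →
      |P (a 0) x - P (a 0) y| ≤ 8 * (L + 1) * Δ ∧
        |P (a L) x - P (a L) y| ≤ 8 * (L + 1) * Δ := by
  intro x y hx hy
  have hΔ : 0 ≤ Δ := le_trans (abs_nonneg _) (hacc 0 (Nat.zero_le _) x)
  have key : ∀ j, j ≤ L → ∀ k, |Q (a 0) k - Q (a j) k| ≤ 2 * j * Δ := by
    intro j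
    induction j with
    | zero => intro _ k; simp
    | succ n ih =>
      intro hj k
      have h1 := ih (Nat.le_of_succ_le hj) k
      have h2 := hchain n (Nat.lt_of_succ_le hj) k
      have h3 := abs_sub_le (Q (a 0) k) (Q (a n) k) (Q (a (n+1)) k)
      have h4 := abs_le.mp h1
      have h5 := abs_le.mp h2
      rw [abs_le] at h3 ⊢
      push_cast at h4 ⊢
      constructor <;> [linarith [h3.1]; linarith [h3.2]]
  have kx := abs_le.mp (key L le_rfl x)
  have ky := abs_le.mp (key L le_rfl y)
  have pux := abs_le.mp (hacc 0 (Nat.zero_le _) x)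
  have puy := abs_le.mp (hacc 0 (Nat.zero_le _) y)
  have pvx := abs_le.mp (hacc L le_rfl x)
  have pvy := abs_le.mp (hacc L le_rfl y)
  have hxy := hx y
  have hyx := hy x
  have hL : (0:ℝ) ≤ L := Nat.cast_nonneg L
  constructor <;> rw [abs_le] <;> constructor <;>
    nlinarith [kx.1, kx.2, ky.1, ky.2, pux.1, pux.2, puy.1, puy.2, pvx.1, pvx.2,
      pvy.1, pvy.2, mul_nonneg hL hΔ]
end

section
/- In a graph on M vertices where the vertices are partitioned into C groups and every group forms a clique, any two vertices lying in the same connected component are joined by a path of length at most 2C − 1. -/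
lemma walk_length_drop {V : Type*} {G : SimpleGraph V} :
    ∀ {u v : V} (p : G.Walk u v) (n : ℕ), (p.drop n).length = p.length - n := by
  intro u v p
  induction p with
  | nil => intro n; cases n <;> simp [SimpleGraph.Walk.drop]
  | cons h r ih =>
    intro n
    cases n with
    | zero => simp [SimpleGraph.Walk.drop]
    | succ m => simp [SimpleGraph.Walk.drop, ih m]

lemma walk_splice {V : Type*} {G : SimpleGraph V} :
    ∀ {u v : V} (p : G.Walk u v) (i k : ℕ), i + 2 ≤ k → k ≤ p.length →
    (G.Adj (p.getVert i) (p.getVert k) ∨ p.getVert i = p.getVert k) →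
    ∃ q : G.Walk u v, q.length < p.length := by
  intro u v p
  induction p with
  | nil =>
    intro i k h1 h2 _
    simp only [SimpleGraph.Walk.length_nil] at h2
    omega
  | @cons u w v h r ih =>
    intro i k h1 h2 h3
    match i, k, h1 with
    | 0, k, h1 =>
      rw [SimpleGraph.Walk.getVert_zero] at h3
      rcases h3 with hadj | heq
      · refine ⟨SimpleGraph.Walk.cons hadj ((SimpleGraph.Walk.cons h r).drop k), ?_⟩
        rw [SimpleGraph.Walk.length_cons, walk_length_drop]
        simp only [SimpleGraph.Walk.length_cons] at h2 ⊢
        omega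
      · refine ⟨((SimpleGraph.Walk.cons h r).drop k).copy heq.symm rfl, ?_⟩
        rw [SimpleGraph.Walk.length_copy, walk_length_drop]
        simp only [SimpleGraph.Walk.length_cons] at h2 ⊢
        omega
    | (i + 1), (k + 1), h1 =>
      have h2' : k ≤ r.length := by
        simpa [Nat.succ_le_succ_iff] using h2
      have h3' : G.Adj (r.getVert i) (r.getVert k) ∨ r.getVert i = r.getVert k := by
        simpa [SimpleGraph.Walk.getVert_cons_succ] using h3
      obtain ⟨q', hq'⟩ := ih i k (by omega) h2' h3'
      exact ⟨SimpleGraph.Walk.cons h q', by simpa using Nat.succ_lt_succ hq'⟩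

/-- In a graph on `M` vertices partitioned into `C` groups, each group forming a clique,
any two vertices in the same connected component are joined by a walk of length at most
`2C - 1`. -/
theorem stmt7 {V : Type*} [Fintype V] (M : ℕ) (hM : Fintype.card V = M)
    (G : SimpleGraph V) (C : ℕ) (group : V → Fin C)
    (hclique : ∀ u v : V, u ≠ v → group u = group v → G.Adj u v) :
    ∀ u v : V, G.Reachable u v → ∃ p : G.Walk u v, p.length ≤ 2 * C - 1 := by
  intro u v huv
  rcases Nat.eq_zero_or_pos C with hC | hC
  · subst hC; exact (group u).elim0
  obtain ⟨p, hp⟩ := huv.exists_walk_length_eq_dist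
  by_cases hle : p.length ≤ 2 * C - 1
  · exact ⟨p, hle⟩
  push_neg at hle
  exfalso
  set L := p.length with hL
  have hcard : Fintype.card (Fin C) * 2 < Fintype.card (Fin (L + 1)) := by
    simp only [Fintype.card_fin]
    omega
  obtain ⟨g, hg⟩ := Fintype.exists_lt_card_fiber_of_mul_lt_card
    (fun n : Fin (L + 1) => group (p.getVert n)) hcard
  obtain ⟨a, ha, b, hb, c, hc, hab, hac, hbc⟩ := Finset.two_lt_card.mp hg
  simp only [Finset.mem_filter, Finset.mem_univ, true_and] at ha hb hc
  have hab' : (a : ℕ) ≠ b := fun h => hab (Fin.ext h)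
  have hac' : (a : ℕ) ≠ c := fun h => hac (Fin.ext h)
  have hbc' : (b : ℕ) ≠ c := fun h => hbc (Fin.ext h)
  have key : ∃ i k : Fin (L + 1),
      group (p.getVert i) = g ∧ group (p.getVert k) = g ∧ (i : ℕ) + 2 ≤ k := by
    have h6 : (a : ℕ) + 2 ≤ b ∨ (b : ℕ) + 2 ≤ a ∨ (a : ℕ) + 2 ≤ c ∨ (c : ℕ) + 2 ≤ a ∨
        (b : ℕ) + 2 ≤ c ∨ (c : ℕ) + 2 ≤ b := by omega
    rcases h6 with h | h | h | h | h | h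
    · exact ⟨a, b, ha, hb, h⟩
    · exact ⟨b, a, hb, ha, h⟩
    · exact ⟨a, c, ha, hc, h⟩
    · exact ⟨c, a, hc, ha, h⟩
    · exact ⟨b, c, hb, hc, h⟩
    · exact ⟨c, b, hc, hb, h⟩
  obtain ⟨i, k, hi, hk, hik⟩ := key
  have hkL : (k : ℕ) ≤ L := Nat.lt_succ_iff.mp k.isLt
  have hadj : G.Adj (p.getVert i) (p.getVert k) ∨ p.getVert i = p.getVert k := by
    by_cases heq : p.getVert i = p.getVert k
    · exact Or.inr heq
    · exact Or.inl (hclique _ _ heq (hi.trans hk.symm))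
  obtain ⟨q, hq⟩ := walk_splice p i k hik hkL hadj
  have := G.dist_le q
  omega
end

section
/- Let N ≥ T ≥ 1 and 1 ≤ T/(4B) < T. The number of subsets S' of [N] of size T that intersect a fixed subset S of size T in more than T/(4B) elements is at most T · (2Ne/T)^{T − T/(4B)} · (4e)^{T/(4B)}. -/
open Finset

private lemma succ_pow_le_exp_mul (M : ℕ) :
    ((M : ℝ) + 1) ^ M ≤ Real.exp 1 * (M : ℝ) ^ M := by
  rcases Nat.eq_zero_or_pos M with h | h
  · subst h; simpa using Real.one_le_exp (by norm_num)
  · have hM : (0 : ℝ) < M := by exact_mod_cast h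
    have h1 : (M : ℝ) + 1 ≤ M * Real.exp (1 / M) := by
      have he := Real.add_one_le_exp (1 / (M : ℝ))
      have hc : (M : ℝ) * (1 / M) = 1 := by field_simp
      nlinarith
    calc ((M : ℝ) + 1) ^ M ≤ ((M : ℝ) * Real.exp (1 / M)) ^ M :=
          pow_le_pow_left₀ (by positivity) h1 M
      _ = (M : ℝ) ^ M * Real.exp (1 / M) ^ M := mul_pow _ _ _
      _ = (M : ℝ) ^ M * Real.exp 1 := by
          rw [← Real.exp_nat_mul]
          congr 1
          field_simp
      _ = Real.exp 1 * (M : ℝ) ^ M := mul_comm _ _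

/-- `(Ne)^m · M^M ≤ (Ne)^M · m^m` for `m ≤ M ≤ N`. -/
private lemma mono_pow (N : ℕ) : ∀ M m : ℕ, m ≤ M → M ≤ N →
    ((N : ℝ) * Real.exp 1) ^ m * (M : ℝ) ^ M ≤ ((N : ℝ) * Real.exp 1) ^ M * (m : ℝ) ^ m := by
  intro M
  induction M with
  | zero => intro m hm _; interval_cases m; simp
  | succ M ih =>
    intro m hm hMN
    rcases Nat.lt_succ_iff_lt_or_eq.mp (Nat.lt_succ_of_le hm) with h | h
    · have hmM : m ≤ M := by omega
      have hMN' : M ≤ N := by omega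
      have h3 := ih m hmM hMN'
      have hN1 : 1 ≤ N := by omega
      have hNpos : (0 : ℝ) < (N : ℝ) * Real.exp 1 := by
        have : (0 : ℝ) < N := by exact_mod_cast hN1
        positivity
      have h2 := succ_pow_le_exp_mul M
      have hMN'' : ((M : ℝ) + 1) ≤ N := by exact_mod_cast hMN
      have hMM : (0 : ℝ) ≤ (M : ℝ) ^ M := by positivity
      have key : (((M + 1 : ℕ)) : ℝ) ^ (M + 1) ≤ ((N : ℝ) * Real.exp 1) * (M : ℝ) ^ M := by
        push_cast
        calc ((M : ℝ) + 1) ^ (M + 1) = ((M : ℝ) + 1) ^ M * ((M : ℝ) + 1) := pow_succ _ _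
          _ ≤ (Real.exp 1 * (M : ℝ) ^ M) * (N : ℝ) := by
              apply mul_le_mul h2 hMN'' (by positivity) (by positivity)
          _ = ((N : ℝ) * Real.exp 1) * (M : ℝ) ^ M := by ring
      calc ((N : ℝ) * Real.exp 1) ^ m * (((M + 1 : ℕ)) : ℝ) ^ (M + 1)
          ≤ ((N : ℝ) * Real.exp 1) ^ m * (((N : ℝ) * Real.exp 1) * (M : ℝ) ^ M) := by
            apply mul_le_mul_of_nonneg_left key (by positivity)
        _ = ((N : ℝ) * Real.exp 1) * (((N : ℝ) * Real.exp 1) ^ m * (M : ℝ) ^ M) := by ring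
        _ ≤ ((N : ℝ) * Real.exp 1) * (((N : ℝ) * Real.exp 1) ^ M * (m : ℝ) ^ m) := by
            apply mul_le_mul_of_nonneg_left h3 hNpos.le
        _ = ((N : ℝ) * Real.exp 1) ^ (M + 1) * (m : ℝ) ^ m := by ring
    · subst h; exact le_refl _

private lemma choose_mul_le (N m : ℕ) (hm : 1 ≤ m) :
    (N.choose m : ℝ) * (m : ℝ) ^ m ≤ ((N : ℝ) * Real.exp 1) ^ m := by
  have h1 : (N.choose m : ℝ) ≤ ((N : ℝ) ^ m : ℝ) / m.factorial := by
    have := Nat.choose_le_pow_div (α := ℝ) m N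
    simpa using this
  have hmpos : (0 : ℝ) < m := by exact_mod_cast hm
  have h2 : (m : ℝ) ^ m / m.factorial ≤ Real.exp m := Real.pow_div_factorial_le_exp (x := (m:ℝ)) (by positivity) m
  have hf : (0 : ℝ) < (m.factorial : ℝ) := by exact_mod_cast m.factorial_pos
  have hexp : Real.exp (m : ℝ) = Real.exp 1 ^ m := (Real.exp_one_pow m).symm
  have h3 : (m : ℝ) ^ m ≤ (m.factorial : ℝ) * Real.exp 1 ^ m := by
    rw [← hexp]
    calc (m : ℝ) ^ m = ((m : ℝ) ^ m / m.factorial) * m.factorial := by field_simp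
      _ ≤ Real.exp m * m.factorial := mul_le_mul_of_nonneg_right h2 hf.le
      _ = (m.factorial : ℝ) * Real.exp m := mul_comm _ _
  calc (N.choose m : ℝ) * (m : ℝ) ^ m
      ≤ ((N : ℝ) ^ m / m.factorial) * ((m.factorial : ℝ) * Real.exp 1 ^ m) :=
        mul_le_mul h1 h3 (by positivity) (by positivity)
    _ = (N : ℝ) ^ m * Real.exp 1 ^ m := by field_simp
    _ = ((N : ℝ) * Real.exp 1) ^ m := (mul_pow _ _ _).symm

private lemma choose_mul_M_le (N M m : ℕ) (hm : m ≤ M) (hM : M ≤ N) :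
    (N.choose m : ℝ) * (M : ℝ) ^ M ≤ ((N : ℝ) * Real.exp 1) ^ M := by
  have hmono := mono_pow N M m hm hM
  rcases Nat.eq_zero_or_pos m with h | h
  · subst h; simpa using hmono
  · have h1 := choose_mul_le N m h
    have hmm : (0 : ℝ) < (m : ℝ) ^ m := by
      have : (0 : ℝ) < m := by exact_mod_cast h
      positivity
    have hMM : (0 : ℝ) ≤ (M : ℝ) ^ M := by positivity
    have h4 : (N.choose m : ℝ) * (M : ℝ) ^ M * (m : ℝ) ^ m
        ≤ ((N : ℝ) * Real.exp 1) ^ M * (m : ℝ) ^ m := by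
      calc (N.choose m : ℝ) * (M : ℝ) ^ M * (m : ℝ) ^ m
          = ((N.choose m : ℝ) * (m : ℝ) ^ m) * (M : ℝ) ^ M := by ring
        _ ≤ ((N : ℝ) * Real.exp 1) ^ m * (M : ℝ) ^ M :=
            mul_le_mul_of_nonneg_right h1 hMM
        _ ≤ ((N : ℝ) * Real.exp 1) ^ M * (m : ℝ) ^ m := hmono
    exact le_of_mul_le_mul_right h4 hmm

private lemma sum_pow_le (M k : ℕ) (hM : 1 ≤ M) :
    (((M + k : ℕ)) : ℝ) ^ M ≤ (M : ℝ) ^ M * Real.exp 1 ^ k := by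
  have hMpos : (0 : ℝ) < M := by exact_mod_cast hM
  have hc : (M : ℝ) * ((k : ℝ) / M) = k := by field_simp
  have h1 : ((M : ℝ) + k) ≤ M * Real.exp ((k : ℝ) / M) := by
    have he := Real.add_one_le_exp ((k : ℝ) / M)
    nlinarith
  calc (((M + k : ℕ)) : ℝ) ^ M = ((M : ℝ) + k) ^ M := by push_cast; ring
    _ ≤ ((M : ℝ) * Real.exp ((k : ℝ) / M)) ^ M := pow_le_pow_left₀ (by positivity) h1 M
    _ = (M : ℝ) ^ M * Real.exp ((k : ℝ) / M) ^ M := mul_pow _ _ _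
    _ = (M : ℝ) ^ M * Real.exp 1 ^ k := by
        rw [← Real.exp_nat_mul, hc, Real.exp_one_pow]

private lemma choose_le_two_pow' (n j : ℕ) : n.choose j ≤ 2 ^ n := by
  rcases le_or_gt j n with h | h
  · calc n.choose j ≤ ∑ i ∈ Finset.range (n + 1), n.choose i :=
        Finset.single_le_sum (fun i _ => Nat.zero_le _) (Finset.mem_range.mpr (by omega))
      _ = 2 ^ n := Nat.sum_range_choose n
  · simp [Nat.choose_eq_zero_of_lt h]

private lemma count_fiber_le {N : ℕ} (T t : ℕ) (S : Finset (Fin N)) (hS : S.card = T)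
    (A : Finset (Finset (Fin N))) (hA : ∀ S' ∈ A, S'.card = T ∧ (S' ∩ S).card = t) :
    A.card ≤ T.choose t * N.choose (T - t) := by
  classical
  calc A.card ≤ (S.powersetCard t ×ˢ (Finset.univ : Finset (Fin N)).powersetCard (T - t)).card := by
        apply Finset.card_le_card_of_injOn (fun S' => (S' ∩ S, S' \ S))
        · intro S' hS'
          obtain ⟨h1, h2⟩ := hA S' hS'
          have hcard : (S' ∩ S).card + (S' \ S).card = S'.card :=
            Finset.card_inter_add_card_sdiff S' S
          simp only [Finset.mem_coe, Finset.mem_product, Finset.mem_powersetCard]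
          exact ⟨⟨Finset.inter_subset_right, h2⟩, Finset.subset_univ _, by omega⟩
        · intro a _ b _ hab
          have h1 : a ∩ S = b ∩ S := congrArg Prod.fst hab
          have h2 : a \ S = b \ S := congrArg Prod.snd hab
          calc a = a \ S ∪ a ∩ S := (Finset.sdiff_union_inter a S).symm
            _ = b \ S ∪ b ∩ S := by rw [h1, h2]
            _ = b := Finset.sdiff_union_inter b S
    _ = T.choose t * N.choose (T - t) := by
        rw [Finset.card_product, Finset.card_powersetCard, Finset.card_powersetCard, hS,
          Finset.card_univ, Fintype.card_fin]

/-- The number of `T`-subsets `S'` of `[N]` intersecting a fixed `T`-subset `S` in more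
than `k = T/(4B)` elements is at most `T · (2Ne/T)^(T−k) · (4e)^k`. -/
theorem stmt9 (N T B k : ℕ) (hTN : T ≤ N) (hk : 4 * B * k = T)
    (hk1 : 1 ≤ k) (hkT : k < T)
    (S : Finset (Fin N)) (hS : S.card = T) :
    ((Finset.univ.filter fun S' : Finset (Fin N) =>
        S'.card = T ∧ k < (S' ∩ S).card).card : ℝ) ≤
      (T : ℝ) * (2 * N * Real.exp 1 / T) ^ (T - k) * (4 * Real.exp 1) ^ k := by
  classical
  set A := Finset.univ.filter fun S' : Finset (Fin N) =>
    S'.card = T ∧ k < (S' ∩ S).card with hAdef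
  set M := T - k with hMdef
  have hM1 : 1 ≤ M := by omega
  have hMN : M ≤ N := by omega
  have hTpos : (0 : ℝ) < T := by
    have : (1 : ℕ) ≤ T := by omega
    exact_mod_cast this
  have e1 : (0 : ℝ) < Real.exp 1 := Real.exp_pos 1
  -- Step 1: fiberwise count
  have hfib : A.card = ∑ t ∈ Finset.Ioc k T, (A.filter fun S' => (S' ∩ S).card = t).card := by
    apply Finset.card_eq_sum_card_fiberwise
    intro S' hS'
    simp only [hAdef, Finset.mem_coe, Finset.mem_filter, Finset.mem_univ, true_and] at hS'
    simp only [Finset.mem_coe, Finset.mem_Ioc]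
    refine ⟨hS'.2, ?_⟩
    calc (S' ∩ S).card ≤ S'.card := Finset.card_le_card Finset.inter_subset_left
      _ = T := hS'.1
  -- Step 2: each fiber is small
  have hstep : ∀ t ∈ Finset.Ioc k T,
      (A.filter fun S' => (S' ∩ S).card = t).card ≤ T.choose t * N.choose (T - t) := by
    intro t _
    apply count_fiber_le T t S hS
    intro S' hS'
    simp only [hAdef, Finset.mem_filter, Finset.mem_univ, true_and] at hS'
    exact ⟨hS'.1.1, hS'.2⟩
  -- Step 3: each term bound
  have hX : (0 : ℝ) ≤ (N : ℝ) * Real.exp 1 / T := by positivity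
  have hterm : ∀ t ∈ Finset.Ioc k T,
      ((T.choose t : ℝ) * (N.choose (T - t) : ℝ)) ≤
        2 ^ T * ((N : ℝ) * Real.exp 1 / T) ^ M * Real.exp 1 ^ k := by
    intro t ht
    simp only [Finset.mem_Ioc] at ht
    have hmM : T - t ≤ M := by omega
    have hC := choose_mul_M_le N M (T - t) hmM hMN
    have hMr : (0 : ℝ) < (M : ℝ) := by exact_mod_cast hM1
    have hMpow : (0 : ℝ) < (M : ℝ) ^ M := by positivity
    have hMk : M + k = T := by omega
    have hTM : (T : ℝ) ^ M ≤ (M : ℝ) ^ M * Real.exp 1 ^ k := by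
      have := sum_pow_le M k hM1
      rwa [hMk] at this
    have hsplit : ((N : ℝ) * Real.exp 1) ^ M = ((N : ℝ) * Real.exp 1 / T) ^ M * (T : ℝ) ^ M := by
      rw [← mul_pow, div_mul_cancel₀]
      exact hTpos.ne'
    have hNe : (N.choose (T - t) : ℝ) ≤ ((N : ℝ) * Real.exp 1 / T) ^ M * Real.exp 1 ^ k := by
      have h7 : (N.choose (T - t) : ℝ) * (M : ℝ) ^ M
          ≤ (((N : ℝ) * Real.exp 1 / T) ^ M * Real.exp 1 ^ k) * (M : ℝ) ^ M := by
        calc (N.choose (T - t) : ℝ) * (M : ℝ) ^ M ≤ ((N : ℝ) * Real.exp 1) ^ M := hC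
          _ = ((N : ℝ) * Real.exp 1 / T) ^ M * (T : ℝ) ^ M := hsplit
          _ ≤ ((N : ℝ) * Real.exp 1 / T) ^ M * ((M : ℝ) ^ M * Real.exp 1 ^ k) :=
              mul_le_mul_of_nonneg_left hTM (by positivity)
          _ = (((N : ℝ) * Real.exp 1 / T) ^ M * Real.exp 1 ^ k) * (M : ℝ) ^ M := by ring
      exact le_of_mul_le_mul_right h7 hMpow
    have hch : (T.choose t : ℝ) ≤ 2 ^ T := by
      have := choose_le_two_pow' T t
      calc (T.choose t : ℝ) ≤ ((2 ^ T : ℕ) : ℝ) := by exact_mod_cast this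
        _ = 2 ^ T := by push_cast; ring
    calc (T.choose t : ℝ) * (N.choose (T - t) : ℝ)
        ≤ 2 ^ T * (((N : ℝ) * Real.exp 1 / T) ^ M * Real.exp 1 ^ k) :=
          mul_le_mul hch hNe (by positivity) (by positivity)
      _ = 2 ^ T * ((N : ℝ) * Real.exp 1 / T) ^ M * Real.exp 1 ^ k := by ring
  -- Step 4: combine
  have h1 : (A.card : ℝ) ≤ ∑ t ∈ Finset.Ioc k T, ((T.choose t : ℝ) * (N.choose (T - t) : ℝ)) := by
    rw [hfib]
    push_cast
    apply Finset.sum_le_sum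
    intro t ht
    exact_mod_cast hstep t ht
  have h2 : ∑ t ∈ Finset.Ioc k T, ((T.choose t : ℝ) * (N.choose (T - t) : ℝ))
      ≤ (Finset.Ioc k T).card • (2 ^ T * ((N : ℝ) * Real.exp 1 / T) ^ M * Real.exp 1 ^ k) :=
    Finset.sum_le_card_nsmul _ _ _ hterm
  have hcard : (Finset.Ioc k T).card = M := by rw [Nat.card_Ioc]
  have hfin : (M : ℝ) * (2 ^ T * ((N : ℝ) * Real.exp 1 / T) ^ M * Real.exp 1 ^ k)
      ≤ (T : ℝ) * (2 * N * Real.exp 1 / T) ^ (T - k) * (4 * Real.exp 1) ^ k := by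
    have hT2 : (2 : ℝ) ^ T = 2 ^ M * 2 ^ k := by rw [← pow_add]; congr 1; omega
    have h4 : (2 * (N : ℝ) * Real.exp 1 / T) = 2 * ((N : ℝ) * Real.exp 1 / T) := by ring
    have key : (M : ℝ) * 2 ^ k ≤ (T : ℝ) * 4 ^ k := by
      have h5 : (M : ℝ) ≤ T := by exact_mod_cast (by omega : M ≤ T)
      have h6 : (2 : ℝ) ^ k ≤ 4 ^ k := pow_le_pow_left₀ (by norm_num) (by norm_num) k
      exact mul_le_mul h5 h6 (by positivity) hTpos.le
    rw [← hMdef, h4, mul_pow, mul_pow]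
    calc (M : ℝ) * (2 ^ T * ((N : ℝ) * Real.exp 1 / T) ^ M * Real.exp 1 ^ k)
        = ((M : ℝ) * 2 ^ k) * (2 ^ M * ((N : ℝ) * Real.exp 1 / T) ^ M * Real.exp 1 ^ k) := by
          rw [hT2]; ring
      _ ≤ ((T : ℝ) * 4 ^ k) * (2 ^ M * ((N : ℝ) * Real.exp 1 / T) ^ M * Real.exp 1 ^ k) :=
          mul_le_mul_of_nonneg_right key (by positivity)
      _ = (T : ℝ) * (2 ^ M * ((N : ℝ) * Real.exp 1 / T) ^ M) * (4 ^ k * Real.exp 1 ^ k) := by ring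
  calc (A.card : ℝ) ≤ ∑ t ∈ Finset.Ioc k T, ((T.choose t : ℝ) * (N.choose (T - t) : ℝ)) := h1
    _ ≤ (Finset.Ioc k T).card • (2 ^ T * ((N : ℝ) * Real.exp 1 / T) ^ M * Real.exp 1 ^ k) := h2
    _ = (M : ℝ) * (2 ^ T * ((N : ℝ) * Real.exp 1 / T) ^ M * Real.exp 1 ^ k) := by
        rw [hcard]; simp [nsmul_eq_mul]
    _ ≤ (T : ℝ) * (2 * N * Real.exp 1 / T) ^ (T - k) * (4 * Real.exp 1) ^ k := hfin
end

section
/- Fano's inequality with approximate recovery: let V be uniform on a finite set 𝒱, let V → X → V̂ be a Markov chain with V̂ taking values in 𝒱̂, and let d : 𝒱 × 𝒱̂ → R and t > 0 define an error event {d(V, V̂) ≥ t}. Then P(error) ≥ 1 − (I(V; V̂) + log 2) / log(|𝒱| / G_max), where G_max = max_{v̂ ∈ 𝒱̂} |{ v ∈ 𝒱 : d(v, v̂) < t }|. -/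
/-- Log-sum inequality. -/
lemma log_sum_ineq {ι : Type*} (s : Finset ι) (p q : ι → ℝ)
    (hp : ∀ i ∈ s, 0 ≤ p i) (hq : ∀ i ∈ s, 0 ≤ q i)
    (hpq : ∀ i ∈ s, q i = 0 → p i = 0) :
    (∑ i ∈ s, p i) * Real.log ((∑ i ∈ s, p i) / (∑ i ∈ s, q i)) ≤
      ∑ i ∈ s, p i * Real.log (p i / q i) := by
  classical
  set P := ∑ i ∈ s, p i with hP
  set Q := ∑ i ∈ s, q i with hQ
  rcases eq_or_lt_of_le (Finset.sum_nonneg hp) with h0 | hPpos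
  · -- P = 0
    have hall : ∀ i ∈ s, p i = 0 :=
      (Finset.sum_eq_zero_iff_of_nonneg hp).1 h0.symm
    have : (∑ i ∈ s, p i * Real.log (p i / q i)) = 0 :=
      Finset.sum_eq_zero fun i hi => by rw [hall i hi]; ring
    rw [this, hP, ← h0, zero_mul]
  · have hQpos : 0 < Q := by
      rcases eq_or_lt_of_le (Finset.sum_nonneg hq) with h0q | h
      · exfalso
        have hallq : ∀ i ∈ s, q i = 0 :=
          (Finset.sum_eq_zero_iff_of_nonneg hq).1 h0q.symm
        have : P = 0 := Finset.sum_eq_zero fun i hi => hpq i hi (hallq i hi)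
        exact absurd this (ne_of_gt hPpos)
      · exact h
    set T := s.filter (fun i => p i ≠ 0) with hT
    have hTsub : T ⊆ s := Finset.filter_subset _ _
    have hPsum : ∑ i ∈ T, p i = P := Finset.sum_filter_ne_zero s
    have hRsum : ∑ i ∈ T, p i * Real.log (p i / q i)
        = ∑ i ∈ s, p i * Real.log (p i / q i) :=
      Finset.sum_filter_of_ne (fun i _ h => by
        intro hp0; apply h; rw [hp0]; ring)
    have key : ∀ i ∈ T, p i * Real.log (P / Q) ≤
        p i * Real.log (p i / q i) + (P / Q) * q i - p i := by
      intro i hi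
      have hiS : i ∈ s := hTsub hi
      have hpi : 0 < p i :=
        lt_of_le_of_ne (hp i hiS) (Ne.symm (Finset.mem_filter.1 hi).2)
      have hqi : 0 < q i := by
        rcases eq_or_lt_of_le (hq i hiS) with h | h
        · exact absurd (hpq i hiS h.symm) (ne_of_gt hpi)
        · exact h
      have hx : (0:ℝ) < (P * q i) / (Q * p i) :=
        div_pos (mul_pos hPpos hqi) (mul_pos hQpos hpi)
      have hlog : Real.log ((P * q i) / (Q * p i)) ≤ (P * q i) / (Q * p i) - 1 :=
        Real.log_le_sub_one_of_pos hx
      have heq : Real.log (P / Q) = Real.log (p i / q i) +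
          Real.log ((P * q i) / (Q * p i)) := by
        rw [Real.log_div (ne_of_gt hPpos) (ne_of_gt hQpos),
          Real.log_div (ne_of_gt hpi) (ne_of_gt hqi),
          Real.log_div (ne_of_gt (mul_pos hPpos hqi)) (ne_of_gt (mul_pos hQpos hpi)),
          Real.log_mul (ne_of_gt hPpos) (ne_of_gt hqi),
          Real.log_mul (ne_of_gt hQpos) (ne_of_gt hpi)]
        ring
      have := mul_le_mul_of_nonneg_left hlog (le_of_lt hpi)
      rw [heq]
      have hrepl : p i * ((P * q i) / (Q * p i) - 1) = (P / Q) * q i - p i := by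
        field_simp
      nlinarith [this, hrepl]
    have hsumkey := Finset.sum_le_sum key
    have hL : ∑ i ∈ T, p i * Real.log (P / Q) = P * Real.log (P / Q) := by
      rw [← Finset.sum_mul, hPsum]
    have hR : ∑ i ∈ T, (p i * Real.log (p i / q i) + (P / Q) * q i - p i)
        = (∑ i ∈ T, p i * Real.log (p i / q i)) + (P / Q) * (∑ i ∈ T, q i) - P := by
      rw [Finset.sum_sub_distrib, Finset.sum_add_distrib, ← Finset.mul_sum, hPsum]
    have hTq : ∑ i ∈ T, q i ≤ Q :=
      Finset.sum_le_sum_of_subset_of_nonneg hTsub (fun i hi _ => hq i hi)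
    have : P * Real.log (P / Q) ≤
        (∑ i ∈ T, p i * Real.log (p i / q i)) + (P / Q) * (∑ i ∈ T, q i) - P := by
      rw [← hL, ← hR]; exact hsumkey
    have hfin : (P / Q) * (∑ i ∈ T, q i) ≤ P := by
      calc (P / Q) * (∑ i ∈ T, q i) ≤ (P / Q) * Q :=
            mul_le_mul_of_nonneg_left hTq (le_of_lt (div_pos hPpos hQpos))
        _ = P := div_mul_cancel₀ _ (ne_of_gt hQpos)
    rw [← hRsum]
    linarith

/-- Mutual information of a joint probability mass function `p` on `V × W`. -/
noncomputable def mutualInfoPMF {V W : Type*} [Fintype V] [Fintype W]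
    (p : V → W → ℝ) : ℝ :=
  ∑ v, ∑ w, p v w * Real.log (p v w / ((∑ w', p v w') * (∑ v', p v' w)))

/-- Fano's inequality with approximate recovery: for `V` uniform on a finite alphabet and
any estimator `V̂` with joint pmf `p`, the probability of the error event `{d(V,V̂) ≥ t}`
is at least `1 − (I(V;V̂) + log 2)/log(|𝒱|/G_max)` where
`G_max = max_{v̂} #{v : d(v,v̂) < t}`. -/
theorem stmt11 {V W : Type*} [Fintype V] [Fintype W] [Nonempty V]
    (p : V → W → ℝ) (d : V → W → ℝ) (t : ℝ) (ht : 0 < t)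
    (hpos : ∀ v w, 0 ≤ p v w) (hsum : ∑ v, ∑ w, p v w = 1)
    (huniform : ∀ v, ∑ w, p v w = 1 / Fintype.card V)
    (Gmax : ℕ)
    (hG : Gmax = Finset.univ.sup fun w : W =>
      (Finset.univ.filter fun v : V => d v w < t).card)
    (hG1 : 1 ≤ Gmax) (hGV : Gmax < Fintype.card V) :
    1 - (mutualInfoPMF p + Real.log 2) /
        Real.log ((Fintype.card V : ℝ) / Gmax) ≤
      ∑ v, ∑ w, if t ≤ d v w then p v w else 0 := by
  classical
  have hNpos : (0:ℝ) < (Fintype.card V : ℝ) := by exact_mod_cast Fintype.card_pos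
  have hGpos : (0:ℝ) < (Gmax:ℝ) := by exact_mod_cast hG1
  have hGN : (Gmax:ℝ) < (Fintype.card V : ℝ) := by exact_mod_cast hGV
  set L : ℝ := Real.log ((Fintype.card V : ℝ) / (Gmax:ℝ)) with hLdef
  have hL : 0 < L := Real.log_pos ((one_lt_div hGpos).2 hGN)
  -- marginals
  set b : W → ℝ := fun w => ∑ v, p v w with hbdef
  have hbnn : ∀ w, 0 ≤ b w := fun w => Finset.sum_nonneg fun v _ => hpos v w
  have hbsum : ∑ w, b w = 1 := by
    rw [hbdef]; rw [Finset.sum_comm]; exact hsum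
  set q : V × W → ℝ := fun vw => b vw.2 / (Fintype.card V : ℝ) with hqdef
  set pp : V × W → ℝ := fun vw => p vw.1 vw.2 with hppdef
  have hqnn : ∀ vw, 0 ≤ q vw := fun vw => div_nonneg (hbnn _) (le_of_lt hNpos)
  have hppnn : ∀ vw, 0 ≤ pp vw := fun vw => hpos _ _
  have hq0 : ∀ vw : V × W, q vw = 0 → pp vw = 0 := by
    rintro ⟨v, w⟩ h
    have hb0 : b w = 0 := by
      rcases div_eq_zero_iff.1 h with h | h
      · exact h
      · exact absurd h (ne_of_gt hNpos)
    have hle : p v w ≤ b w := Finset.single_le_sum (fun v _ => hpos v w) (Finset.mem_univ v)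
    have := hpos v w
    simp only [hppdef]
    linarith [hb0 ▸ hle]
  -- mutual information as a sum over the product type
  have hmi : mutualInfoPMF p = ∑ vw : V × W, pp vw * Real.log (pp vw / q vw) := by
    rw [mutualInfoPMF, Fintype.sum_prod_type]
    refine Finset.sum_congr rfl fun v _ => Finset.sum_congr rfl fun w _ => ?_
    rw [huniform v]
    rw [one_div_mul_eq_div]
  set A : Finset (V × W) := Finset.univ.filter (fun vw : V × W => t ≤ d vw.1 vw.2) with hA
  set B : Finset (V × W) := Finset.univ.filter (fun vw : V × W => ¬ t ≤ d vw.1 vw.2) with hB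
  set P := ∑ vw ∈ A, pp vw with hPdef
  set P' := ∑ vw ∈ B, pp vw with hP'def
  set QA := ∑ vw ∈ A, q vw with hQAdef
  set QB := ∑ vw ∈ B, q vw with hQBdef
  have hPnn : 0 ≤ P := Finset.sum_nonneg fun vw _ => hppnn vw
  have hP'nn : 0 ≤ P' := Finset.sum_nonneg fun vw _ => hppnn vw
  have hQAnn : 0 ≤ QA := Finset.sum_nonneg fun vw _ => hqnn vw
  have hQBnn : 0 ≤ QB := Finset.sum_nonneg fun vw _ => hqnn vw
  have hPtot : P + P' = 1 := by
    rw [hPdef, hP'def, hA, hB, Finset.sum_filter_add_sum_filter_not]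
    rw [Fintype.sum_prod_type]; exact hsum
  have hinnerq : ∀ w : W, (∑ _v : V, b w / (Fintype.card V : ℝ)) = b w := by
    intro w
    rw [Finset.sum_const, nsmul_eq_mul, Finset.card_univ, mul_div_cancel₀]
    exact ne_of_gt hNpos
  have hQtot : QA + QB = 1 := by
    rw [hQAdef, hQBdef, hA, hB, Finset.sum_filter_add_sum_filter_not]
    rw [Fintype.sum_prod_type_right]
    calc (∑ w, ∑ v : V, q (v, w)) = ∑ w, b w := Finset.sum_congr rfl fun w _ => hinnerq w
      _ = 1 := hbsum
  -- key combinatorial bound on QB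
  have hQB : QB ≤ (Gmax : ℝ) / (Fintype.card V : ℝ) := by
    have hcard : ∀ w : W,
        ((Finset.univ.filter fun v : V => d v w < t).card : ℝ) ≤ (Gmax : ℝ) := by
      intro w
      exact_mod_cast hG ▸ Finset.le_sup (f := fun w : W =>
        (Finset.univ.filter fun v : V => d v w < t).card) (Finset.mem_univ w)
    rw [hQBdef, hB, Finset.sum_filter, Fintype.sum_prod_type_right]
    have hstep : ∀ w : W, (∑ v : V, if ¬ t ≤ d v w then q (v, w) else 0)
        = ((Finset.univ.filter fun v : V => d v w < t).card : ℝ) *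
            (b w / (Fintype.card V : ℝ)) := by
      intro w
      have hqval : ∀ v : V, q (v, w) = b w / (Fintype.card V : ℝ) := fun _ => rfl
      rw [← Finset.sum_filter]
      rw [Finset.sum_congr rfl fun v _ => hqval v, Finset.sum_const, nsmul_eq_mul]
      congr 2
      simp [not_le]
    calc (∑ w, ∑ v : V, if ¬ t ≤ d v w then q (v, w) else 0)
        = ∑ w, ((Finset.univ.filter fun v : V => d v w < t).card : ℝ) *
            (b w / (Fintype.card V : ℝ)) := Finset.sum_congr rfl fun w _ => hstep w
      _ ≤ ∑ w, (Gmax : ℝ) * (b w / (Fintype.card V : ℝ)) := by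
            refine Finset.sum_le_sum fun w _ => ?_
            exact mul_le_mul_of_nonneg_right (hcard w)
              (div_nonneg (hbnn w) (le_of_lt hNpos))
      _ = (Gmax : ℝ) / (Fintype.card V : ℝ) := by
            rw [← Finset.mul_sum, ← Finset.sum_div, ← hbdef, hbsum]
            ring
  -- splitting mutual information
  have hsplit : mutualInfoPMF p
      = (∑ vw ∈ A, pp vw * Real.log (pp vw / q vw))
        + (∑ vw ∈ B, pp vw * Real.log (pp vw / q vw)) := by
    rw [hmi, hA, hB, Finset.sum_filter_add_sum_filter_not]
  -- log-sum bounds on each part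
  have hlsA : P * Real.log (P / QA) ≤ ∑ vw ∈ A, pp vw * Real.log (pp vw / q vw) :=
    log_sum_ineq A pp q (fun vw _ => hppnn vw) (fun vw _ => hqnn vw)
      (fun vw _ h => hq0 vw h)
  have hlsB : P' * Real.log (P' / QB) ≤ ∑ vw ∈ B, pp vw * Real.log (pp vw / q vw) :=
    log_sum_ineq B pp q (fun vw _ => hppnn vw) (fun vw _ => hqnn vw)
      (fun vw _ h => hq0 vw h)
  -- positivity of partial q-masses when p-masses positive
  have hQApos : 0 < P → 0 < QA := by
    intro hP
    rcases eq_or_lt_of_le hQAnn with h | h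
    · exfalso
      have hallq : ∀ vw ∈ A, q vw = 0 :=
        (Finset.sum_eq_zero_iff_of_nonneg fun vw _ => hqnn vw).1 h.symm
      have : P = 0 := Finset.sum_eq_zero fun vw hvw => hq0 vw (hallq vw hvw)
      exact absurd this (ne_of_gt hP)
    · exact h
  have hQBpos : 0 < P' → 0 < QB := by
    intro hP
    rcases eq_or_lt_of_le hQBnn with h | h
    · exfalso
      have hallq : ∀ vw ∈ B, q vw = 0 :=
        (Finset.sum_eq_zero_iff_of_nonneg fun vw _ => hqnn vw).1 h.symm
      have : P' = 0 := Finset.sum_eq_zero fun vw hvw => hq0 vw (hallq vw hvw)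
      exact absurd this (ne_of_gt hP)
    · exact h
  -- bound for the A part
  have h1 : P * Real.log P ≤ ∑ vw ∈ A, pp vw * Real.log (pp vw / q vw) := by
    rcases eq_or_lt_of_le hPnn with h0 | hP
    · rw [← h0, zero_mul]
      refine Finset.sum_nonneg fun vw hvw => ?_
      have : pp vw = 0 :=
        (Finset.sum_eq_zero_iff_of_nonneg fun vw _ => hppnn vw).1 h0.symm vw hvw
      rw [this, zero_mul]
    · refine le_trans ?_ hlsA
      have hQA1 : QA ≤ 1 := by linarith
      have hQApos' := hQApos hP
      have : P ≤ P / QA := by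
        rw [le_div_iff₀ hQApos']
        nlinarith
      exact mul_le_mul_of_nonneg_left (Real.log_le_log hP this) hPnn
  -- bound for the B part
  have h2 : P' * Real.log P' + P' * L ≤ ∑ vw ∈ B, pp vw * Real.log (pp vw / q vw) := by
    rcases eq_or_lt_of_le hP'nn with h0 | hP
    · rw [← h0, zero_mul, zero_mul, add_zero]
      refine Finset.sum_nonneg fun vw hvw => ?_
      have : pp vw = 0 :=
        (Finset.sum_eq_zero_iff_of_nonneg fun vw _ => hppnn vw).1 h0.symm vw hvw
      rw [this, zero_mul]
    · refine le_trans ?_ hlsB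
      have hQBpos' := hQBpos hP
      have hlogQB : Real.log QB ≤ Real.log ((Gmax : ℝ) / (Fintype.card V : ℝ)) :=
        Real.log_le_log hQBpos' hQB
      have hLeq : L = - Real.log ((Gmax : ℝ) / (Fintype.card V : ℝ)) := by
        rw [hLdef, ← Real.log_inv]
        congr 1
        field_simp
      have hexp : Real.log (P' / QB) = Real.log P' - Real.log QB :=
        Real.log_div (ne_of_gt hP) (ne_of_gt hQBpos')
      have : Real.log P' + L ≤ Real.log (P' / QB) := by
        rw [hexp, hLeq]; linarith
      calc P' * Real.log P' + P' * L = P' * (Real.log P' + L) := by ring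
        _ ≤ P' * Real.log (P' / QB) := mul_le_mul_of_nonneg_left this hP'nn
  -- binary entropy bound via log-sum on Bool
  have h3 : - Real.log 2 ≤ P * Real.log P + P' * Real.log P' := by
    have key := log_sum_ineq (Finset.univ : Finset Bool)
      (fun i => if i then P else P') (fun _ => 1)
      (fun i _ => by split <;> assumption)
      (fun i _ => zero_le_one)
      (fun i _ h => absurd h one_ne_zero)
    simp only [Fintype.sum_bool] at key
    norm_num at key
    rw [hPtot] at key
    have h2 : Real.log (1/2) = - Real.log 2 := by
      rw [one_div, Real.log_inv]
    rw [one_mul] at key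
    norm_num at key h2
    linarith
  -- combine everything
  have hmain : P' * L ≤ mutualInfoPMF p + Real.log 2 := by
    rw [hsplit]; linarith
  have hfinal : P' ≤ (mutualInfoPMF p + Real.log 2) / L := by
    rw [le_div_iff₀ hL]; exact hmain
  -- identify the goal's RHS with P
  have hgoal : (∑ v, ∑ w, if t ≤ d v w then p v w else 0) = P := by
    rw [hPdef, hA, Finset.sum_filter, Fintype.sum_prod_type]
  rw [hgoal]
  linarith
end
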